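/- Let Y be a metric space, X a topological space, and f : X → Y a compressive continuous surjection. For any compressive cover 𝒱 for f there is a compressive cover 𝒱̃ for f that star refines 𝒱. -/

import Mathlib

/-- `(V', V)` is a compressive pair for `f`: both sets are open, `V' ⊆ V`, and
`f⁻¹(V')` is contractible in `f⁻¹(V)`. -/
def IsCompressivePair {X Y : Type*} [TopologicalSpace X] [TopologicalSpace Y]
    (f : X → Y) (V' V : Set Y) : Prop :=
  IsOpen V' ∧ IsOpen V ∧ V' ⊆ V ∧
    ∃ ξ : (f ⁻¹' V') × unitInterval → (f ⁻¹' V),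
      Continuous ξ ∧
      (∀ x : f ⁻¹' V', ((ξ (x, 0) : X) = (x : X))) ∧
      ∃ c : f ⁻¹' V, ∀ x : f ⁻¹' V', ξ (x, 1) = c

/-- `f` is compressive: for every `y ∈ Y` and every open neighborhood `V` of `y`
there is an open neighborhood `V'` of `y` such that `(V', V)` is a compressive
pair for `f`. -/
def IsCompressive {X Y : Type*} [TopologicalSpace X] [TopologicalSpace Y]
    (f : X → Y) : Prop :=
  ∀ (y : Y) (V : Set Y), IsOpen V → y ∈ V →
    ∃ V' : Set Y, y ∈ V' ∧ IsCompressivePair f V' V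

/-- A compressive cover for `f` is a collection of compressive pairs whose first
components form a locally finite open cover of `Y`. -/
def IsCompressiveCover {X Y : Type*} [TopologicalSpace X] [TopologicalSpace Y]
    (f : X → Y) (𝒱 : Set (Set Y × Set Y)) : Prop :=
  (∀ p ∈ 𝒱, IsCompressivePair f p.1 p.2) ∧
  (⋃ p ∈ 𝒱, p.1) = Set.univ ∧
  LocallyFinite fun p : 𝒱 => p.1.1

/-- `𝒲` star refines `𝒱` if for each `(Ṽ', Ṽ) ∈ 𝒲` there is `(V', V) ∈ 𝒱`
such that the union of all `Ṽ₀` over pairs `(Ṽ₀', Ṽ₀) ∈ 𝒲` with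
`Ṽ₀ ∩ Ṽ ≠ ∅` is contained in `V'`. -/
def StarRefines {Y : Type*} (𝒲 𝒱 : Set (Set Y × Set Y)) : Prop :=
  ∀ q ∈ 𝒲, ∃ p ∈ 𝒱,
    (⋃ q₀ ∈ {q₀ ∈ 𝒲 | q₀.2 ∩ q.2 ≠ ∅}, q₀.2) ⊆ p.1

/-- A compressive pair restricts along a smaller open first component. -/
lemma IsCompressivePair.mono_left {X Y : Type*} [TopologicalSpace X] [TopologicalSpace Y]
    {f : X → Y} {V' V R : Set Y} (h : IsCompressivePair f V' V)
    (hR : IsOpen R) (hRV : R ⊆ V') : IsCompressivePair f R V := by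
  obtain ⟨hV', hV, hsub, ξ, hξc, hξ0, c, hξ1⟩ := h
  refine ⟨hR, hV, hRV.trans hsub,
    fun q => ξ (⟨q.1.1, hRV q.1.2⟩, q.2), ?_, fun x => hξ0 _, c, fun x => hξ1 _⟩
  exact hξc.comp (Continuous.prodMk
    (Continuous.subtype_mk (continuous_subtype_val.comp continuous_fst) _) continuous_snd)

/-- **Lemma 2.2.** For any compressive cover `𝒱` for a compressive continuous
surjection `f : X → Y` onto a metric space, there is a compressive cover `𝒲`
for `f` that star refines `𝒱`. -/
theorem stmt_9 {X Y : Type*} [TopologicalSpace X] [MetricSpace Y]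
    (f : X → Y) (hfc : Continuous f) (hfs : Function.Surjective f)
    (hcomp : IsCompressive f)
    (𝒱 : Set (Set Y × Set Y)) (h𝒱 : IsCompressiveCover f 𝒱) :
    ∃ 𝒲 : Set (Set Y × Set Y), IsCompressiveCover f 𝒲 ∧ StarRefines 𝒲 𝒱 := by
  classical
  obtain ⟨h𝒱pair, h𝒱cov, h𝒱lf⟩ := h𝒱
  -- the ENNReal "radius of largest useful ball" function
  set S : Y → ENNReal :=
    fun z => ⨆ p : 𝒱, min 1 (EMetric.infEdist z ((p : Set Y × Set Y)).1ᶜ) with hSdef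
  have hS1 : ∀ z, S z ≤ 1 := fun z => iSup_le fun p => min_le_left _ _
  have hStop : ∀ z, S z ≠ ⊤ := fun z => ((hS1 z).trans_lt ENNReal.one_lt_top).ne
  have hSpos : ∀ z, 0 < S z := by
    intro z
    have hz : z ∈ ⋃ p ∈ 𝒱, p.1 := h𝒱cov.symm ▸ Set.mem_univ z
    simp only [Set.mem_iUnion] at hz
    obtain ⟨p, hp, hzp⟩ := hz
    have hcl : z ∉ closure p.1ᶜ := by
      rw [(isClosed_compl_iff.2 (h𝒱pair p hp).1).closure_eq]
      exact fun h => h hzp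
    have h1 : (0 : ENNReal) < min 1 (EMetric.infEdist z p.1ᶜ) :=
      lt_min one_pos (EMetric.infEdist_pos_iff_notMem_closure.2 hcl)
    exact h1.trans_le
      (le_iSup (fun p : 𝒱 => min 1 (EMetric.infEdist z ((p : Set Y × Set Y)).1ᶜ)) ⟨p, hp⟩)
  set ρ : Y → ℝ := fun z => (S z).toReal with hρdef
  have hρpos : ∀ z, 0 < ρ z := fun z => ENNReal.toReal_pos (hSpos z).ne' (hStop z)
  have hρlip : ∀ y z : Y, ρ y ≤ ρ z + dist y z := by
    intro y z
    have hSle : S y ≤ S z + edist y z := by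
      refine iSup_le fun p => ?_
      calc min 1 (EMetric.infEdist y ((p : Set Y × Set Y)).1ᶜ)
          ≤ min 1 (EMetric.infEdist z ((p : Set Y × Set Y)).1ᶜ + edist y z) :=
            min_le_min le_rfl EMetric.infEdist_le_infEdist_add_edist
        _ ≤ min (1 + edist y z) (EMetric.infEdist z ((p : Set Y × Set Y)).1ᶜ + edist y z) :=
            min_le_min (le_add_right le_rfl) le_rfl
        _ = min 1 (EMetric.infEdist z ((p : Set Y × Set Y)).1ᶜ) + edist y z :=
            (min_add_add_right _ _ _)
        _ ≤ S z + edist y z :=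
            add_le_add_left
              (le_iSup (fun p : 𝒱 => min 1 (EMetric.infEdist z ((p : Set Y × Set Y)).1ᶜ)) p) _
    have := ENNReal.toReal_mono
      (by exact ENNReal.add_ne_top.2 ⟨hStop z, edist_ne_top y z⟩) hSle
    rwa [ENNReal.toReal_add (hStop z) (edist_ne_top y z), ← dist_edist] at this
  have hball : ∀ z, ∃ p ∈ 𝒱, Metric.ball z (3 / 4 * ρ z) ⊆ p.1 := by
    intro z
    have h34 : ENNReal.ofReal (3 / 4 * ρ z) < S z := by
      conv_rhs => rw [← ENNReal.ofReal_toReal (hStop z)]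
      exact (ENNReal.ofReal_lt_ofReal_iff (hρpos z)).2 (by nlinarith [hρpos z])
    obtain ⟨⟨p, hp⟩, hlt⟩ := lt_iSup_iff.1 h34
    refine ⟨p, hp, fun x hx => ?_⟩
    by_contra hxp
    have h1 : EMetric.infEdist z p.1ᶜ ≤ edist z x := EMetric.infEdist_le_edist_of_mem hxp
    have h2 : ENNReal.ofReal (3 / 4 * ρ z) < ENNReal.ofReal (dist z x) := by
      rw [← edist_dist]
      exact hlt.trans_le ((min_le_right _ _).trans h1)
    have h3 := (ENNReal.ofReal_lt_ofReal_iff_of_nonneg (by positivity)).1 h2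
    rw [Metric.mem_ball, dist_comm] at hx
    linarith
  -- the balls
  set A : Y → Set Y := fun z => Metric.ball z (ρ z / 8) with hAdef
  have hAopen : ∀ z, IsOpen (A z) := fun z => Metric.isOpen_ball
  have hAmem : ∀ z, z ∈ A z := fun z => Metric.mem_ball_self (by have := hρpos z; positivity)
  have hstar : ∀ z, ∃ p ∈ 𝒱, ∀ w, (A w ∩ A z).Nonempty → A w ⊆ p.1 := by
    intro z
    obtain ⟨p, hp, hpb⟩ := hball z
    refine ⟨p, hp, fun w ⟨x, hxw, hxz⟩ x' hx' => hpb ?_⟩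
    rw [Metric.mem_ball] at hxw hxz hx' ⊢
    have t1 : dist w z ≤ dist w x + dist x z := dist_triangle _ _ _
    have t2 : dist x' z ≤ dist x' w + dist w z := dist_triangle _ _ _
    have hl := hρlip w z
    rw [dist_comm w x] at t1
    nlinarith [hρpos z, hρpos w]
  -- compressiveness inside each ball
  have hc : ∀ z : Y, ∃ V' : Set Y, z ∈ V' ∧ IsCompressivePair f V' (A z) :=
    fun z => hcomp z (A z) (hAopen z) (hAmem z)
  choose V' hV'mem hV'pair using hc
  -- a precise locally finite refinement
  obtain ⟨v, hvo, hvc, hvlf, hvsub⟩ :=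
    precise_refinement V' (fun z => (hV'pair z).1)
      (Set.eq_univ_iff_forall.2 fun z => Set.mem_iUnion.2 ⟨z, hV'mem z⟩)
  refine ⟨Set.range fun z => (v z, A z), ⟨?_, ?_, ?_⟩, ?_⟩
  · rintro p ⟨z, rfl⟩
    exact (hV'pair z).mono_left (hvo z) (hvsub z)
  · refine Set.eq_univ_iff_forall.2 fun y => ?_
    have hy : y ∈ ⋃ z, v z := hvc.symm ▸ Set.mem_univ y
    obtain ⟨z, hz⟩ := Set.mem_iUnion.1 hy
    exact Set.mem_iUnion₂.2 ⟨(v z, A z), ⟨z, rfl⟩, hz⟩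
  · set 𝒲 : Set (Set Y × Set Y) := Set.range fun z => (v z, A z) with h𝒲
    have hg : ∀ q : 𝒲, ∃ z, (v z, A z) = (q : Set Y × Set Y) := fun q => q.2
    choose g hgspec using hg
    have hfeq : (fun q : 𝒲 => (q : Set Y × Set Y).1) = v ∘ g := by
      funext q
      rw [← hgspec q]
      rfl
    rw [hfeq]
    refine hvlf.comp_injective fun q q' hqq' => ?_
    apply Subtype.ext
    rw [← hgspec q, ← hgspec q', hqq']
  · rintro q ⟨z, rfl⟩
    obtain ⟨p, hp, hps⟩ := hstar z
    refine ⟨p, hp, fun y hy => ?_⟩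
    simp only [Set.mem_iUnion, Set.mem_setOf_eq] at hy
    obtain ⟨q₀, ⟨⟨w, rfl⟩, hne⟩, hyq₀⟩ := hy
    exact hps w (Set.nonempty_iff_ne_empty.2 hne) hyq₀
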